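/- Let a > b > 0, V > 0, k > 0, and let x, y : ℝ → ℝ be differentiable functions such that (x(t), y(t)) ≠ (0, 0) for all t ≥ 0 and such that ẋ(t) = V·cos(ψ_D(x(t), y(t))) and ẏ(t) = V·sin(ψ_D(x(t), y(t))) for all t ≥ 0. Then the function t ↦ (x(t)²/a² + y(t)²/b² − 1)² is nonincreasing on [0, ∞), and its derivative is strictly negative at every t with x(t)²/a² + y(t)²/b² ≠ 1. -/

import Mathlib

open Real

/-- The counter-clockwise tangential heading at `(x, y)`:
`atan2 (b² x, −a² y)`, i.e. the argument of the complex number `−a² y + i b² x`. -/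
noncomputable def psiT (a b x y : ℝ) : ℝ :=
  Complex.arg ⟨-(a ^ 2) * y, b ^ 2 * x⟩

/-- The offset angle `ψ_O = arctan (k (γ − 1))` with `γ = x²/a² + y²/b²`. -/
noncomputable def psiO (a b k x y : ℝ) : ℝ :=
  Real.arctan (k * (x ^ 2 / a ^ 2 + y ^ 2 / b ^ 2 - 1))

/-- The desired heading `ψ_D = ψ_T + ψ_O`. -/
noncomputable def psiD (a b k x y : ℝ) : ℝ :=
  psiT a b x y + psiO a b k x y

lemma key_eq (a b k c d : ℝ) (ha : a ≠ 0) (hb : b ≠ 0) (hcd : (c, d) ≠ ((0 : ℝ), (0 : ℝ))) :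
    c / a ^ 2 * Real.cos (psiD a b k c d) + d / b ^ 2 * Real.sin (psiD a b k c d)
      = -((b ^ 2 * c ^ 2 / a ^ 2 + a ^ 2 * d ^ 2 / b ^ 2)
          / ‖(⟨-(a ^ 2) * d, b ^ 2 * c⟩ : ℂ)‖) * Real.sin (psiO a b k c d) := by
  set z : ℂ := ⟨-(a ^ 2) * d, b ^ 2 * c⟩ with hzdef
  have hz0 : z ≠ 0 := by
    intro h
    apply hcd
    have hre : -(a ^ 2) * d = 0 := congrArg Complex.re h
    have him : b ^ 2 * c = 0 := congrArg Complex.im h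
    have ha2 : a ^ 2 ≠ 0 := pow_ne_zero _ ha
    have hb2 : b ^ 2 ≠ 0 := pow_ne_zero _ hb
    have hd0 : d = 0 := by
      rcases mul_eq_zero.mp hre with h | h
      · exact absurd (neg_eq_zero.mp h) ha2
      · exact h
    have hc0 : c = 0 := by
      rcases mul_eq_zero.mp him with h | h
      · exact absurd h hb2
      · exact h
    simp [hc0, hd0]
  have hR : (0 : ℝ) < ‖z‖ := norm_pos_iff.mpr hz0
  have hcos : Real.cos (psiT a b c d) = -(a ^ 2) * d / ‖z‖ := by
    have := Complex.cos_arg hz0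
    simpa [psiT, hzdef] using this
  have hsin : Real.sin (psiT a b c d) = b ^ 2 * c / ‖z‖ := by
    have := Complex.sin_arg z
    simpa [psiT, hzdef] using this
  rw [psiD, Real.cos_add, Real.sin_add, hcos, hsin]
  have ha2 : a ^ 2 ≠ 0 := pow_ne_zero _ ha
  have hb2 : b ^ 2 ≠ 0 := pow_ne_zero _ hb
  field_simp
  ring

theorem lyapunov_nonincreasing
    (a b V k : ℝ) (hab : b < a) (hb : 0 < b) (hV : 0 < V) (hk : 0 < k)
    (x y : ℝ → ℝ) (hx : Differentiable ℝ x) (hy : Differentiable ℝ y)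
    (hne : ∀ t : ℝ, 0 ≤ t → (x t, y t) ≠ (0, 0))
    (hxd : ∀ t : ℝ, 0 ≤ t → deriv x t = V * Real.cos (psiD a b k (x t) (y t)))
    (hyd : ∀ t : ℝ, 0 ≤ t → deriv y t = V * Real.sin (psiD a b k (x t) (y t))) :
    AntitoneOn (fun t => (x t ^ 2 / a ^ 2 + y t ^ 2 / b ^ 2 - 1) ^ 2) (Set.Ici (0 : ℝ)) ∧
    ∀ t : ℝ, 0 ≤ t → x t ^ 2 / a ^ 2 + y t ^ 2 / b ^ 2 ≠ 1 →
      deriv (fun τ => (x τ ^ 2 / a ^ 2 + y τ ^ 2 / b ^ 2 - 1) ^ 2) t < 0 := by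
  have ha : (0 : ℝ) < a := lt_trans hb hab
  have ha0 : a ≠ 0 := ne_of_gt ha
  have hb0 : b ≠ 0 := ne_of_gt hb
  set L : ℝ → ℝ := fun τ => (x τ ^ 2 / a ^ 2 + y τ ^ 2 / b ^ 2 - 1) ^ 2 with hLdef
  -- derivative formula at each t ≥ 0
  have key : ∀ t : ℝ, 0 ≤ t →
      deriv L t ≤ 0 ∧ (x t ^ 2 / a ^ 2 + y t ^ 2 / b ^ 2 ≠ 1 → deriv L t < 0) := by
    intro t ht
    set c := x t with hc
    set d := y t with hd
    set γ : ℝ := c ^ 2 / a ^ 2 + d ^ 2 / b ^ 2 with hγ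
    set R : ℝ := ‖(⟨-(a ^ 2) * d, b ^ 2 * c⟩ : ℂ)‖ with hRdef
    set S : ℝ := b ^ 2 * c ^ 2 / a ^ 2 + a ^ 2 * d ^ 2 / b ^ 2 with hS
    have hcd : (c, d) ≠ ((0 : ℝ), (0 : ℝ)) := hne t ht
    have hz0 : (⟨-(a ^ 2) * d, b ^ 2 * c⟩ : ℂ) ≠ 0 := by
      intro h
      apply hcd
      have hre : -(a ^ 2) * d = 0 := congrArg Complex.re h
      have him : b ^ 2 * c = 0 := congrArg Complex.im h
      have hd0 : d = 0 := by
        rcases mul_eq_zero.mp hre with h' | h'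
        · exact absurd (neg_eq_zero.mp h') (pow_ne_zero _ ha0)
        · exact h'
      have hc0 : c = 0 := by
        rcases mul_eq_zero.mp him with h' | h'
        · exact absurd h' (pow_ne_zero _ hb0)
        · exact h'
      simp [hc0, hd0]
    have hR : 0 < R := norm_pos_iff.mpr hz0
    have hSpos : 0 < S := by
      have hcd' : c ≠ 0 ∨ d ≠ 0 := by
        by_contra h
        push_neg at h
        exact hcd (by simp [h.1, h.2])
      rw [hS]
      rcases hcd' with h' | h'
      · have h1 : 0 < b ^ 2 * c ^ 2 / a ^ 2 := by positivity
        have h2 : 0 ≤ a ^ 2 * d ^ 2 / b ^ 2 := by positivity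
        linarith
      · have h1 : 0 < a ^ 2 * d ^ 2 / b ^ 2 := by positivity
        have h2 : 0 ≤ b ^ 2 * c ^ 2 / a ^ 2 := by positivity
        linarith
    -- derivative of γ - 1 part
    have hg : HasDerivAt (fun τ => x τ ^ 2 / a ^ 2 + y τ ^ 2 / b ^ 2 - 1)
        (2 * c * deriv x t / a ^ 2 + 2 * d * deriv y t / b ^ 2) t := by
      have h1 : HasDerivAt (fun τ => x τ ^ 2 / a ^ 2)
          (((2 : ℕ) * x t ^ (2 - 1) * deriv x t) / a ^ 2) t :=
        (((hx t).hasDerivAt).pow 2).div_const _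
      have h2 : HasDerivAt (fun τ => y τ ^ 2 / b ^ 2)
          (((2 : ℕ) * y t ^ (2 - 1) * deriv y t) / b ^ 2) t :=
        (((hy t).hasDerivAt).pow 2).div_const _
      have := (h1.add h2).sub_const 1
      refine this.congr_deriv ?_
      push_cast
      rw [hc, hd]
      ring
    have hL : HasDerivAt L
        (2 * (γ - 1) * (2 * c * deriv x t / a ^ 2 + 2 * d * deriv y t / b ^ 2)) t := by
      have := hg.pow 2
      refine this.congr_deriv ?_
      push_cast
      rw [hγ, hc, hd]
      ring
    have hderiv : deriv L t
        = 2 * (γ - 1) * (2 * c * deriv x t / a ^ 2 + 2 * d * deriv y t / b ^ 2) := hL.deriv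
    -- rewrite using the dynamics
    have hE : c * deriv x t / a ^ 2 + d * deriv y t / b ^ 2
        = V * (-(S / R) * Real.sin (psiO a b k c d)) := by
      rw [hxd t ht, hyd t ht]
      have := key_eq a b k c d ha0 hb0 hcd
      rw [← hRdef, ← hS] at this
      calc c * (V * Real.cos (psiD a b k c d)) / a ^ 2
            + d * (V * Real.sin (psiD a b k c d)) / b ^ 2
          = V * (c / a ^ 2 * Real.cos (psiD a b k c d)
            + d / b ^ 2 * Real.sin (psiD a b k c d)) := by ring
        _ = V * (-(S / R) * Real.sin (psiO a b k c d)) := by rw [this]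
    have hsinO : Real.sin (psiO a b k c d)
        = k * (γ - 1) / Real.sqrt (1 + (k * (γ - 1)) ^ 2) := by
      rw [psiO, Real.sin_arctan, ← hγ]
    have hsqrt : 0 < Real.sqrt (1 + (k * (γ - 1)) ^ 2) := by positivity
    have hfinal : deriv L t
        = -(4 * V * S / R * (k / Real.sqrt (1 + (k * (γ - 1)) ^ 2))) * (γ - 1) ^ 2 := by
      rw [hderiv]
      have : 2 * c * deriv x t / a ^ 2 + 2 * d * deriv y t / b ^ 2
          = 2 * (c * deriv x t / a ^ 2 + d * deriv y t / b ^ 2) := by ring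
      rw [this, hE, hsinO]
      field_simp
      ring
    have hfac : 0 < 4 * V * S / R * (k / Real.sqrt (1 + (k * (γ - 1)) ^ 2)) := by positivity
    constructor
    · rw [hfinal]
      nlinarith [sq_nonneg (γ - 1)]
    · intro hγ1
      rw [hfinal]
      have hγ1' : γ - 1 ≠ 0 := sub_ne_zero.mpr hγ1
      have hsq : 0 < (γ - 1) ^ 2 := by positivity
      exact mul_neg_of_neg_of_pos (neg_lt_zero.mpr hfac) hsq
  constructor
  · have hcont : ContinuousOn L (Set.Ici 0) := by
      apply Continuous.continuousOn
      have hxc := hx.continuous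
      have hyc := hy.continuous
      fun_prop
    apply antitoneOn_of_deriv_nonpos (convex_Ici 0) hcont
    · apply Differentiable.differentiableOn
      fun_prop
    · intro t ht
      rw [interior_Ici] at ht
      exact (key t (le_of_lt ht)).1
  · intro t ht hγ1
    exact (key t ht).2 hγ1
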